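/- For every real r ≥ 1 and every z ∈ (0,1), the function ϑ_r(z) := (r−1)Ψ_r(z) + (1−z)Ψ_r'(z) equals (r+1)(z(1−z)^r + z^r(1−z)) + (r−1)(z^{r+1} + (1−z)^{r+1}) and is strictly positive. -/

import Mathlib

open Real in
theorem stmt_3 (r : ℝ) (hr : 1 ≤ r) (z : ℝ) (hz : z ∈ Set.Ioo (0:ℝ) 1)
    (Ψ : ℝ → ℝ)
    (hΨ : ∀ v : ℝ, Ψ v = (r - 1) * v * (1 - v) ^ r + v ^ (r + 1) + r * v ^ 2 * (1 - v) ^ (r - 1)) :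
    (r - 1) * Ψ z + (1 - z) * deriv Ψ z
      = (r + 1) * (z * (1 - z) ^ r + z ^ r * (1 - z)) + (r - 1) * (z ^ (r + 1) + (1 - z) ^ (r + 1))
    ∧ 0 < (r - 1) * Ψ z + (1 - z) * deriv Ψ z := by
  obtain ⟨hz0, hz1⟩ := hz
  have hw : (0:ℝ) < 1 - z := by linarith
  have hwne : (1 : ℝ) - z ≠ 0 := hw.ne'
  have hΨeq : Ψ = fun v => (r - 1) * v * (1 - v) ^ r + v ^ (r + 1) + r * v ^ 2 * (1 - v) ^ (r - 1) :=
    funext hΨ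
  -- derivative computation
  have hu : HasDerivAt (fun v : ℝ => 1 - v) (-1) z := by
    simpa using (hasDerivAt_id z).const_sub 1
  have h1 : HasDerivAt (fun v : ℝ => (1 - v) ^ r) (r * (1 - z) ^ (r - 1) * (-1)) z :=
    (Real.hasDerivAt_rpow_const (p := r) (Or.inl hwne)).comp z hu
  have h2 : HasDerivAt (fun v : ℝ => (1 - v) ^ (r - 1)) ((r - 1) * (1 - z) ^ (r - 1 - 1) * (-1)) z :=
    (Real.hasDerivAt_rpow_const (p := r - 1) (Or.inl hwne)).comp z hu
  have hp1 : HasDerivAt (fun v : ℝ => (r - 1) * v * (1 - v) ^ r)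
      ((r - 1) * (1 - z) ^ r + ((r - 1) * z) * (r * (1 - z) ^ (r - 1) * (-1))) z := by
    have := (((hasDerivAt_id z).const_mul (r - 1)).mul h1)
    simpa [Pi.mul_def, mul_comm, mul_assoc, mul_left_comm] using this
  have hp2 : HasDerivAt (fun v : ℝ => v ^ (r + 1)) ((r + 1) * z ^ r) z := by
    have := Real.hasDerivAt_rpow_const (x := z) (p := r + 1) (Or.inl hz0.ne')
    simpa using this
  have hp3 : HasDerivAt (fun v : ℝ => r * v ^ 2 * (1 - v) ^ (r - 1))
      ((r * (2 * z)) * (1 - z) ^ (r - 1) + (r * z ^ 2) * ((r - 1) * (1 - z) ^ (r - 1 - 1) * (-1))) z := by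
    have hpow : HasDerivAt (fun v : ℝ => r * v ^ 2) (r * (2 * z)) z := by
      simpa using (hasDerivAt_pow 2 z).const_mul r
    exact hpow.mul h2
  have hd : deriv Ψ z = ((r - 1) * (1 - z) ^ r + ((r - 1) * z) * (r * (1 - z) ^ (r - 1) * (-1)))
      + (r + 1) * z ^ r
      + ((r * (2 * z)) * (1 - z) ^ (r - 1) + (r * z ^ 2) * ((r - 1) * (1 - z) ^ (r - 1 - 1) * (-1))) := by
    rw [hΨeq]
    exact ((hp1.add hp2).add hp3).deriv
  -- rpow rewrites
  have ew1 : (1 - z) ^ (r - 1) = (1 - z) ^ (r - 1 - 1) * (1 - z) := by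
    rw [← Real.rpow_add_one hwne]; ring_nf
  have ew2 : (1 - z) ^ r = (1 - z) ^ (r - 1 - 1) * (1 - z) * (1 - z) := by
    rw [← ew1, ← Real.rpow_add_one hwne]; ring_nf
  have ew3 : (1 - z) ^ (r + 1) = (1 - z) ^ (r - 1 - 1) * (1 - z) * (1 - z) * (1 - z) := by
    rw [← ew2, ← Real.rpow_add_one hwne]
  have ez1 : z ^ (r + 1) = z ^ r * z := Real.rpow_add_one hz0.ne' r
  have key : (r - 1) * Ψ z + (1 - z) * deriv Ψ z
      = (r + 1) * (z * (1 - z) ^ r + z ^ r * (1 - z)) + (r - 1) * (z ^ (r + 1) + (1 - z) ^ (r + 1)) := by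
    rw [hd, hΨ z, ew3, ew2, ew1, ez1]; ring
  refine ⟨key, ?_⟩
  rw [key]
  have h1pos : 0 < (r + 1) * (z * (1 - z) ^ r + z ^ r * (1 - z)) := by
    have := Real.rpow_pos_of_pos hw r
    have := Real.rpow_pos_of_pos hz0 r
    positivity
  have h2nonneg : 0 ≤ (r - 1) * (z ^ (r + 1) + (1 - z) ^ (r + 1)) := by
    have h1 := Real.rpow_pos_of_pos hw (r + 1)
    have h2 := Real.rpow_pos_of_pos hz0 (r + 1)
    have : 0 ≤ r - 1 := by linarith
    positivity
  linarith
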